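/- arXiv:1902.00399 — 3 statements merged into one kernel-verified Lean document; each statement's English description precedes it below -/
import Mathlib

section
/- Let L be a graded atomic lattice whose set A of atoms is independent. Then L is isomorphic to the Boolean lattice B(A): the map B(A) → L sending a subset {a_1,…,a_k} ⊆ A to the join a_1 ∨ … ∨ a_k (the empty set to 0) is an isomorphism of lattices. -/
/-- Let `L` be a graded atomic lattice whose set `A` of atoms is
independent.  Then `L` is isomorphic to the Boolean lattice `B(A)` of subsets of `A`:
the map `B(A) → L` sending a subset of `A` to its join (the empty set to `⊥`) is an
isomorphism of lattices. -/
theorem graded_atomic_lattice_with_independent_atoms_is_boolean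
    {L : Type*} [Lattice L] [OrderBot L] [Fintype L]
    (A : Finset L) (hA : ∀ a : L, a ∈ A ↔ IsAtom a)
    -- `L` is graded (by the standard rank function = height):
    (hGraded : ∀ x y : L, x ⋖ y → Order.height y = Order.height x + 1)
    -- `L` is atomic: every element is a join of atoms:
    (hAtomic : ∀ x : L, ∃ S ⊆ A, S.sup id = x)
    -- the set `A` of atoms is independent:
    (hInd : ∀ T : Finset L, T ⊂ A → T.sup id < A.sup id) :
    ∃ e : {s : Finset L // s ⊆ A} ≃o L, ∀ s : {s : Finset L // s ⊆ A}, e s = s.1.sup id := by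
  classical
  have key : ∀ a ∈ A, ∀ S ⊆ A, a ≤ S.sup id → a ∈ S := by
    intro a ha S hS hle
    by_contra h
    have hT : A.erase a ⊂ A := Finset.erase_ssubset ha
    have hlt := hInd _ hT
    have hle2 : A.sup id ≤ (A.erase a).sup id := by
      apply Finset.sup_le
      intro b hb
      rcases eq_or_ne b a with rfl | hne
      · refine le_trans hle (Finset.sup_mono ?_)
        intro x hx
        exact Finset.mem_erase.mpr ⟨fun he => h (he ▸ hx), hS hx⟩
      · exact Finset.le_sup (f := id) (Finset.mem_erase.mpr ⟨hne, hb⟩)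
    exact absurd hle2 (not_le_of_gt hlt)
  have hrel : ∀ s t : {s : Finset L // s ⊆ A}, s.1.sup id ≤ t.1.sup id ↔ s ≤ t := by
    intro s t
    constructor
    · intro h
      show s.1 ⊆ t.1
      intro x hx
      exact key x (s.2 hx) t.1 t.2 (le_trans (Finset.le_sup (f := id) hx) h)
    · intro h
      exact Finset.sup_mono h
  have hinj : Function.Injective (fun s : {s : Finset L // s ⊆ A} => s.1.sup id) := by
    intro s t h
    exact le_antisymm ((hrel s t).1 (le_of_eq h)) ((hrel t s).1 (ge_of_eq h))
  have hsurj : Function.Surjective (fun s : {s : Finset L // s ⊆ A} => s.1.sup id) := by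
    intro x
    obtain ⟨S, hS, hsup⟩ := hAtomic x
    exact ⟨⟨S, hS⟩, hsup⟩
  exact ⟨{ toEquiv := Equiv.ofBijective _ ⟨hinj, hsurj⟩,
           map_rel_iff' := fun {s t} => hrel s t }, fun s => rfl⟩
end

section
/- Let L be a geometric lattice with atom set A that is not isomorphic to the Boolean lattice B(A). Then there exists a dependent atom a ∈ A; and for such an atom a, the deletion L_a has exactly |A| − 1 atoms (namely A∖{a}) and rk(L_a) = rk(L), while the restriction L^a has at most |A| − 1 atoms and rk(L^a) = rk(L) − 1. -/
private lemma myht_ne_top {L : Type*} [Preorder L] [Fintype L] (x : L) :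
    Order.height x ≠ ⊤ := by
  have h : Order.height x ≤ (Fintype.card L : ℕ∞) := by
    apply Order.height_le
    intro p _
    exact_mod_cast (p.length_lt_card).le
  intro hx
  rw [hx] at h
  simp at h

private lemma myht_step {L : Type*} [Lattice L] [OrderBot L] [Fintype L]
    (hGraded : ∀ x y : L, x ⋖ y → Order.height y = Order.height x + 1)
    (hGeo : ∀ x y : L,
      Order.height (x ⊔ y) + Order.height (x ⊓ y) ≤ Order.height x + Order.height y)
    {x b : L} (hb : IsAtom b) (hbx : ¬ b ≤ x) :
    Order.height (x ⊔ b) = Order.height x + 1 := by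
  have hhb : Order.height b = 1 := by
    rw [hGraded ⊥ b hb.bot_covBy, Order.height_bot, zero_add]
  have hinf : x ⊓ b = ⊥ := by
    rcases hb.le_iff.mp inf_le_right with h | h
    · exact h
    · exact absurd (h ▸ inf_le_left) hbx
  have hle : Order.height (x ⊔ b) ≤ Order.height x + 1 := by
    have := hGeo x b
    rwa [hinf, Order.height_bot, add_zero, hhb] at this
  have hlt : Order.height x < Order.height (x ⊔ b) :=
    Order.height_strictMono (left_lt_sup.mpr hbx)
      (lt_top_iff_ne_top.mpr (myht_ne_top x))
  exact le_antisymm hle ((ENat.add_one_le_iff (myht_ne_top x)).mpr hlt)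


/-- A finite set `S` of elements (atoms) of a lattice is independent if the join of
every proper subset is strictly smaller than the join of `S`. -/
def FinsetIndep {L : Type*} [Lattice L] [OrderBot L] (S : Finset L) : Prop :=
  ∀ T : Finset L, T ⊂ S → T.sup id < S.sup id

/-- `a` is a dependent atom (w.r.t. the atom set `A`): it belongs to a dependent set
`S` of atoms with `⋁(S∖{a}) = ⋁S`. -/
def IsDepAtom {L : Type*} [Lattice L] [OrderBot L] [DecidableEq L]
    (A : Finset L) (a : L) : Prop :=
  a ∈ A ∧ ∃ S ⊆ A, ¬ FinsetIndep S ∧ a ∈ S ∧ (S.erase a).sup id = S.sup id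

/-- The deletion `L_a`: the set of joins of sets of atoms not containing `a`
(the empty join being `⊥`). -/
def DelSet {L : Type*} [Lattice L] [OrderBot L] [DecidableEq L]
    (A : Finset L) (a : L) : Set L :=
  {x | ∃ S ⊆ A.erase a, S.sup id = x}

/-- A geometric lattice `L` with atom set `A` that is not Boolean has
a dependent atom `a`; and for any dependent atom `a`, the deletion `L_a` has exactly
`|A| − 1` atoms, namely `A∖{a}`, with `rk(L_a) = rk(L)`, while the restriction `L^a`
has at most `|A| − 1` atoms and `rk(L^a) = rk(L) − 1`. -/
theorem geometric_lattice_dependent_atom_deletion_restriction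
    {L : Type*} [Lattice L] [OrderBot L] [OrderTop L] [Fintype L] [DecidableEq L]
    (A : Finset L) (hA : ∀ a : L, a ∈ A ↔ IsAtom a)
    -- `L` is graded (by the standard rank function = height):
    (hGraded : ∀ x y : L, x ⋖ y → Order.height y = Order.height x + 1)
    -- `L` is atomic: every element is a join of atoms:
    (hAtomic : ∀ x : L, ∃ S ⊆ A, S.sup id = x)
    -- the rank function is submodular (`L` is geometric):
    (hGeo : ∀ x y : L,
      Order.height (x ⊔ y) + Order.height (x ⊓ y) ≤ Order.height x + Order.height y)
    -- `L` is not Boolean: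
    (hNotBool : IsEmpty ({s : Finset L // s ⊆ A} ≃o L)) :
    (∃ a : L, IsDepAtom A a) ∧
    ∀ a : L, IsDepAtom A a →
      -- the atoms of the deletion `L_a` (minimal nonzero elements of `L_a`) are `A∖{a}`:
      ({x : L | x ∈ DelSet A a ∧ ⊥ < x ∧ ∀ z ∈ DelSet A a, z < x → z = ⊥}
          = (↑(A.erase a) : Set L)) ∧
      (A.erase a).card = A.card - 1 ∧
      -- `rk(L_a) = rk(L)`, the rank being the height of the maximum `⋁(A∖{a})` in `L_a`:
      Order.height
          (⟨(A.erase a).sup id, ⟨A.erase a, Finset.Subset.refl _, rfl⟩⟩ : ↥(DelSet A a))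
        = Order.height (⊤ : L) ∧
      -- the restriction `L^a` has at most `|A| − 1` atoms (its atoms are covers of `a`):
      {x : L | a ⋖ x}.ncard ≤ A.card - 1 ∧
      -- `rk(L^a) = rk(L) − 1`, the rank being the height of `⊤` in `L^a = L_{≥a}`:
      Order.height (⟨(⊤ : L), le_top⟩ : ↥{x : L | a ≤ x})
        = Order.height (⊤ : L) - 1 := by
  have hAtop : A.sup id = ⊤ := by
    obtain ⟨S, hS, hsup⟩ := hAtomic ⊤
    exact le_antisymm le_top (hsup ▸ Finset.sup_mono hS)
  constructor
  · -- existence of a dependent atom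
    by_contra hno
    push_neg at hno
    have hindep : ∀ S ⊆ A, FinsetIndep S := by
      intro S hSA
      by_contra hdep
      have hdep' := hdep
      simp only [FinsetIndep, not_forall] at hdep'
      obtain ⟨T, hTS, hT⟩ := hdep'
      have heq : T.sup id = S.sup id :=
        (lt_or_eq_of_le (Finset.sup_mono hTS.subset)).resolve_left hT
      obtain ⟨a, haS, haT⟩ := Finset.exists_of_ssubset hTS
      have hTe : T ⊆ S.erase a := fun b hb =>
        Finset.mem_erase.mpr ⟨fun h => haT (h ▸ hb), hTS.subset hb⟩
      have herase : (S.erase a).sup id = S.sup id :=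
        le_antisymm (Finset.sup_mono (Finset.erase_subset a S))
          (heq ▸ Finset.sup_mono hTe)
      exact hno a ⟨hSA haS, S, hSA, hdep, haS, herase⟩
    have key : ∀ S : Finset L, S ⊆ A → ∀ b ∈ A, b ≤ S.sup id → b ∈ S := by
      intro S hSA b hbA hb
      by_contra hbS
      have h2 := hindep (insert b S) (Finset.insert_subset hbA hSA) S
        (Finset.ssubset_insert hbS)
      rw [Finset.sup_insert] at h2
      simp only [id] at h2
      rw [sup_eq_right.mpr hb] at h2
      exact lt_irrefl _ h2
    have hmono : ∀ s t : {s : Finset L // s ⊆ A},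
        s.val.sup id ≤ t.val.sup id ↔ s ≤ t := by
      intro s t
      constructor
      · intro h b hb
        exact key t.val t.2 b (s.2 hb) (le_trans (Finset.le_sup (f := id) hb) h)
      · intro h
        exact Finset.sup_mono h
    have hsurj : Function.Surjective
        (fun s : {s : Finset L // s ⊆ A} => s.val.sup id) := by
      intro x
      obtain ⟨S, hS, h⟩ := hAtomic x
      exact ⟨⟨S, hS⟩, h⟩
    have hinj : Function.Injective
        (fun s : {s : Finset L // s ⊆ A} => s.val.sup id) := fun s t h =>
      le_antisymm ((hmono s t).mp h.le) ((hmono t s).mp h.ge)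
    exact hNotBool.elim ⟨Equiv.ofBijective _ ⟨hinj, hsurj⟩, @fun s t => hmono s t⟩
  · intro a ha
    obtain ⟨haA, S, hSA, hSdep, haS, hSerase⟩ := ha
    have hba : IsAtom a := (hA a).mp haA
    have haLe : a ≤ (A.erase a).sup id := by
      calc a ≤ S.sup id := Finset.le_sup (f := id) haS
        _ = (S.erase a).sup id := hSerase.symm
        _ ≤ (A.erase a).sup id := Finset.sup_mono (Finset.erase_subset_erase a hSA)
    have hetop : (A.erase a).sup id = ⊤ := by
      apply le_antisymm le_top
      rw [← hAtop]
      apply Finset.sup_le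
      intro b hb
      by_cases hb' : b = a
      · subst hb'; exact haLe
      · exact Finset.le_sup (Finset.mem_erase.mpr ⟨hb', hb⟩)
    refine ⟨?_, Finset.card_erase_of_mem haA, ?_, ?_, ?_⟩
    · -- atoms of the deletion
      ext x
      constructor
      · rintro ⟨⟨S', hS', rfl⟩, hx1, hx2⟩
        obtain ⟨b, hbS'⟩ : S'.Nonempty := by
          by_contra h
          rw [Finset.not_nonempty_iff_eq_empty] at h
          subst h
          simp at hx1
        have hbA : b ∈ A.erase a := hS' hbS'
        have hbatom : IsAtom b := (hA b).mp (Finset.mem_of_mem_erase hbA)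
        have hble : (id b : L) ≤ S'.sup id := Finset.le_sup hbS'
        rcases eq_or_lt_of_le hble with h | h
        · rw [← h]
          exact_mod_cast hbA
        · exact absurd
            (hx2 b ⟨{b}, Finset.singleton_subset_iff.mpr hbA, by simp⟩ h) hbatom.1
      · intro hx
        have hxA : x ∈ A.erase a := by exact_mod_cast hx
        have hxatom : IsAtom x := (hA x).mp (Finset.mem_of_mem_erase hxA)
        exact ⟨⟨{x}, Finset.singleton_subset_iff.mpr hxA, by simp⟩,
          bot_lt_iff_ne_bot.mpr hxatom.1, fun z _ hzx => hxatom.2 z hzx⟩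
    · -- rank of the deletion
      set n : ℕ := (Order.height (⊤ : L)).toNat with hndef
      have hn : (n : ℕ∞) = Order.height (⊤ : L) := ENat.coe_toNat (myht_ne_top _)
      have key : ∀ m : ℕ, (m : ℕ∞) ≤ Order.height (⊤ : L) →
          ∃ p : LTSeries ↥(DelSet A a), p.length = m ∧
            Order.height (p.last : L) = m := by
        intro m
        induction m with
        | zero =>
          intro _
          exact ⟨RelSeries.singleton _ ⟨⊥, ∅, Finset.empty_subset _, Finset.sup_empty⟩,
            rfl, by simp [RelSeries.last_singleton]⟩
        | succ m ih =>
          intro hm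
          obtain ⟨p, hlen, hht⟩ := ih (le_trans (by exact_mod_cast Nat.le_succ m) hm)
          have hxlt : Order.height (p.last : L) < Order.height (⊤ : L) := by
            rw [hht]
            exact lt_of_lt_of_le (by exact_mod_cast Nat.lt_succ_self m) hm
          have hex : ∃ b ∈ A.erase a, ¬ b ≤ (p.last : L) := by
            by_contra h
            push_neg at h
            have h2 : (⊤ : L) ≤ (p.last : L) := hetop ▸ Finset.sup_le h
            rw [top_le_iff.mp h2] at hxlt
            exact lt_irrefl _ hxlt
          obtain ⟨b, hbA, hbx⟩ := hex
          have hbatom : IsAtom b := (hA b).mp (Finset.mem_of_mem_erase hbA)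
          obtain ⟨S', hS', hS'x⟩ := p.last.2
          have hymem : (p.last : L) ⊔ b ∈ DelSet A a :=
            ⟨insert b S', Finset.insert_subset hbA hS', by
              rw [Finset.sup_insert, hS'x]; exact sup_comm _ _⟩
          refine ⟨p.snoc ⟨(p.last : L) ⊔ b, hymem⟩ (by
              show p.last < _; rw [← Subtype.coe_lt_coe]; exact left_lt_sup.mpr hbx), ?_, ?_⟩
          · simp [RelSeries.snoc_length, hlen]
          · rw [RelSeries.last_snoc]
            show Order.height ((p.last : L) ⊔ b) = ((m + 1 : ℕ) : ℕ∞)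
            rw [myht_step hGraded hGeo hbatom hbx, hht]
            push_cast
            ring
      obtain ⟨p, hlen, hht⟩ := key n (le_of_eq hn)
      have hlast : (p.last : L) = ⊤ := by
        by_contra h
        have hc := Order.height_strictMono (lt_top_iff_ne_top.mpr h)
          (lt_top_iff_ne_top.mpr (myht_ne_top ((p.last : L))))
        rw [hht, ← hn] at hc
        exact lt_irrefl _ hc
      have hlast' : p.last
          = (⟨(A.erase a).sup id, ⟨A.erase a, Finset.Subset.refl _, rfl⟩⟩ :
              ↥(DelSet A a)) :=
        Subtype.ext (by rw [hlast]; exact hetop.symm)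
      apply le_antisymm
      · exact le_trans
          (Order.height_le_height_apply_of_strictMono Subtype.val (fun _ _ h => h) _)
          (Order.height_mono le_top)
      · rw [← hn, ← hlast']
        calc (n : ℕ∞) = (p.length : ℕ∞) := by exact_mod_cast hlen.symm
          _ ≤ Order.height p.last := Order.length_le_height_last
    · -- number of atoms of the restriction
      have hsub : {x : L | a ⋖ x} ⊆ (fun b => a ⊔ b) '' (↑(A.erase a) : Set L) := by
        intro x hx
        obtain ⟨S', hS', hsup⟩ := hAtomic x
        have hex : ∃ b ∈ S', ¬ b ≤ a := by
          by_contra h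
          push_neg at h
          exact absurd (hsup ▸ Finset.sup_le h) (not_le_of_gt hx.lt)
        obtain ⟨b, hbS, hbna⟩ := hex
        refine ⟨b, by
          exact_mod_cast Finset.mem_erase.mpr ⟨fun h => hbna h.le, hS' hbS⟩, ?_⟩
        have h1 : a < a ⊔ b := left_lt_sup.mpr hbna
        have h2 : a ⊔ b ≤ x := sup_le hx.lt.le (hsup ▸ Finset.le_sup (f := id) hbS)
        exact (lt_or_eq_of_le h2).resolve_left (hx.2 h1)
      calc {x : L | a ⋖ x}.ncard
          ≤ ((fun b => a ⊔ b) '' (↑(A.erase a) : Set L)).ncard :=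
            Set.ncard_le_ncard hsub (Set.toFinite _)
        _ ≤ (↑(A.erase a) : Set L).ncard := Set.ncard_image_le (Set.toFinite _)
        _ = (A.erase a).card := Set.ncard_coe_finset _
        _ = A.card - 1 := Finset.card_erase_of_mem haA
    · -- rank of the restriction
      set n : ℕ := (Order.height (⊤ : L)).toNat with hndef
      have hn : (n : ℕ∞) = Order.height (⊤ : L) := ENat.coe_toNat (myht_ne_top _)
      have hha : Order.height a = 1 := by
        rw [hGraded ⊥ a hba.bot_covBy, Order.height_bot, zero_add]
      have hn1 : 1 ≤ n := by
        have h1 : (1 : ℕ∞) ≤ Order.height (⊤ : L) := hha ▸ Order.height_mono le_top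
        rw [← hn] at h1
        exact_mod_cast h1
      rw [← hn]
      have hcast : (n : ℕ∞) - 1 = ((n - 1 : ℕ) : ℕ∞) := by
        rw [ENat.coe_sub, Nat.cast_one]
      rw [hcast]
      have heq1 : ((n - 1 : ℕ) : ℕ∞) + 1 = (n : ℕ∞) := by
        exact_mod_cast (by omega : (n - 1) + 1 = n)
      apply le_antisymm
      · apply Order.height_le
        intro p hp
        set q : LTSeries L := p.map Subtype.val (fun _ _ h => h) with hq
        have hqh : (⊥ : L) < q.head := lt_of_lt_of_le (bot_lt_iff_ne_bot.mpr hba.1) p.head.2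
        have h2 := Order.length_le_height_last (p := q.cons ⊥ hqh)
        rw [RelSeries.last_cons] at h2
        have hql : q.last = ⊤ := by
          show (p.last : L) = ⊤
          rw [hp]
        rw [hql, ← hn] at h2
        have hlen : (q.cons ⊥ hqh).length = p.length + 1 := by
          simp [RelSeries.cons, hq]
        rw [hlen] at h2
        have h3 : p.length + 1 ≤ n := by exact_mod_cast h2
        exact_mod_cast (by omega : p.length ≤ n - 1)
      · have key2 : ∀ m : ℕ, (m : ℕ∞) + 1 ≤ Order.height (⊤ : L) →
            ∃ p : LTSeries ↥{x : L | a ≤ x}, p.length = m ∧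
              Order.height (p.last : L) = (m : ℕ∞) + 1 := by
          intro m
          induction m with
          | zero =>
            intro _
            exact ⟨RelSeries.singleton _ ⟨a, le_rfl⟩, rfl,
              by simpa [RelSeries.last_singleton] using hha⟩
          | succ m ih =>
            intro hm
            obtain ⟨p, hlen, hht⟩ := ih (le_trans (by
              push_cast
              exact_mod_cast (by omega : m + 1 ≤ m + 1 + 1)) hm)
            have hxlt : Order.height (p.last : L) < Order.height (⊤ : L) := by
              rw [hht]
              refine lt_of_lt_of_le ?_ hm
              exact_mod_cast (by omega : m + 1 < m + 1 + 1)
            have hex : ∃ b ∈ A, ¬ b ≤ (p.last : L) := by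
              by_contra h
              push_neg at h
              have h2 : (⊤ : L) ≤ (p.last : L) := hAtop ▸ Finset.sup_le h
              rw [top_le_iff.mp h2] at hxlt
              exact lt_irrefl _ hxlt
            obtain ⟨b, hbA, hbx⟩ := hex
            have hbatom : IsAtom b := (hA b).mp hbA
            have hymem : (p.last : L) ⊔ b ∈ {x : L | a ≤ x} :=
              le_trans p.last.2 le_sup_left
            refine ⟨p.snoc ⟨(p.last : L) ⊔ b, hymem⟩ (by
                show p.last < _; rw [← Subtype.coe_lt_coe]; exact left_lt_sup.mpr hbx), ?_, ?_⟩
            · simp [RelSeries.snoc_length, hlen]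
            · rw [RelSeries.last_snoc]
              show Order.height ((p.last : L) ⊔ b) = ((m + 1 : ℕ) : ℕ∞) + 1
              rw [myht_step hGraded hGeo hbatom hbx, hht]
              push_cast
              ring
        obtain ⟨p, hlen, hht⟩ := key2 (n - 1) (by rw [heq1, hn])
        have hlast : (p.last : L) = ⊤ := by
          by_contra h
          have hc := Order.height_strictMono (lt_top_iff_ne_top.mpr h)
            (lt_top_iff_ne_top.mpr (myht_ne_top ((p.last : L))))
          rw [hht, heq1, ← hn] at hc
          exact lt_irrefl _ hc
        have hlast' : p.last = (⟨(⊤ : L), le_top⟩ : ↥{x : L | a ≤ x}) :=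
          Subtype.ext hlast
        rw [← hlast']
        calc ((n - 1 : ℕ) : ℕ∞) = (p.length : ℕ∞) := by exact_mod_cast hlen.symm
          _ ≤ Order.height p.last := Order.length_le_height_last
end

section
/- Let L be a graded atomic lattice with atom set A, let a ∈ A, and set L₁ = L∖{0, a}. For x ∈ L∖{0} let B_x = {b ∈ A∖{a} : b ≤ x}, and define t : L₁ → L_a∖{0} by t(x) = x if x ∈ L_a and t(x) = ⋁B_x otherwise. Then t is well defined (B_x ≠ ∅ for x ∈ L₁ and t(x) ∈ L_a∖{0}), t is order-preserving, and for every x ∈ L_a∖{0} the preimage t^{-1}({y ∈ L_a∖{0} : y ≥ x}) has minimum element x. -/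
/-- The set `B_x = {b ∈ A∖{a} : b ≤ x}`. -/
noncomputable def Bset {L : Type*} [Lattice L] [OrderBot L] [DecidableEq L]
    (A : Finset L) (a x : L) : Finset L :=
  letI := Classical.dec
  A.filter (fun b => b ≠ a ∧ b ≤ x)

/-- The map `t : L₁ → L_a∖{0}`: `t(x) = x` if `x ∈ L_a`, and `t(x) = ⋁B_x` otherwise. -/
noncomputable def tmap {L : Type*} [Lattice L] [OrderBot L] [DecidableEq L]
    (A : Finset L) (a x : L) : L :=
  letI := Classical.dec
  if x ∈ DelSet A a then x else (Bset A a x).sup id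

lemma mem_Bset {L : Type*} [Lattice L] [OrderBot L] [DecidableEq L]
    (A : Finset L) (a x b : L) : b ∈ Bset A a x ↔ b ∈ A ∧ b ≠ a ∧ b ≤ x := by
  classical
  simp [Bset, Finset.mem_filter]

lemma sup_Bset_le {L : Type*} [Lattice L] [OrderBot L] [DecidableEq L]
    (A : Finset L) (a x : L) : (Bset A a x).sup id ≤ x :=
  Finset.sup_le fun b hb => ((mem_Bset A a x b).1 hb).2.2

lemma le_sup_Bset_of_mem {L : Type*} [Lattice L] [OrderBot L] [DecidableEq L]
    (A : Finset L) (a x : L) (hx : x ∈ DelSet A a) : x ≤ (Bset A a x).sup id := by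
  obtain ⟨S, hS, rfl⟩ := hx
  refine Finset.sup_mono fun b hb => ?_
  have hbA := hS hb
  exact (mem_Bset A a _ b).2 ⟨Finset.mem_of_mem_erase hbA,
    Finset.ne_of_mem_erase hbA, Finset.le_sup (f := id) hb⟩

lemma tmap_eq {L : Type*} [Lattice L] [OrderBot L] [DecidableEq L]
    (A : Finset L) (a x : L) : tmap A a x = (Bset A a x).sup id := by
  classical
  unfold tmap
  split_ifs with h
  · have e : (fun a b => Classical.dec (a = b) : DecidableEq L) = ‹DecidableEq L› :=
      Subsingleton.elim _ _
    rw [e] at h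
    exact le_antisymm (le_sup_Bset_of_mem A a x h) (sup_Bset_le A a x)
  · rfl

lemma tmap_le {L : Type*} [Lattice L] [OrderBot L] [DecidableEq L]
    (A : Finset L) (a x : L) : tmap A a x ≤ x := by
  rw [tmap_eq]; exact sup_Bset_le A a x

/-- For a graded atomic lattice `L` with atom set `A` and an atom
`a ∈ A`, with `L₁ = L∖{0,a}`: the map `t` is well defined (`B_x ≠ ∅` for `x ∈ L₁` and
`t(x) ∈ L_a∖{0}`), `t` is order-preserving, and for every `x ∈ L_a∖{0}` the preimage
`t⁻¹({y ∈ L_a∖{0} : y ≥ x})` has minimum element `x`. -/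
theorem tmap_well_defined_monotone_preimage_min
    {L : Type*} [Lattice L] [OrderBot L] [Fintype L] [DecidableEq L]
    (A : Finset L) (hA : ∀ a : L, a ∈ A ↔ IsAtom a)
    -- `L` is graded (by the standard rank function = height):
    (hGraded : ∀ x y : L, x ⋖ y → Order.height y = Order.height x + 1)
    -- `L` is atomic: every element is a join of atoms:
    (hAtomic : ∀ x : L, ∃ S ⊆ A, S.sup id = x)
    (a : L) (ha : a ∈ A) :
    -- `B_x` is nonempty for `x ∈ L₁ = L∖{0,a}`:
    (∀ x : L, x ≠ ⊥ → x ≠ a → (Bset A a x).Nonempty) ∧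
    -- `t` maps `L₁` into `L_a∖{0}`:
    (∀ x : L, x ≠ ⊥ → x ≠ a → tmap A a x ∈ DelSet A a ∧ tmap A a x ≠ ⊥) ∧
    -- `t` is a poset map:
    (∀ x y : L, x ≠ ⊥ → x ≠ a → y ≠ ⊥ → y ≠ a → x ≤ y → tmap A a x ≤ tmap A a y) ∧
    -- for `x ∈ L_a∖{0}`, the preimage of `{y ∈ L_a∖{0} : y ≥ x}` has minimum `x`:
    (∀ x : L, x ∈ DelSet A a → x ≠ ⊥ →
      IsLeast {y : L | (y ≠ ⊥ ∧ y ≠ a) ∧ x ≤ tmap A a y} x) := by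
  have hBne : ∀ x : L, x ≠ ⊥ → x ≠ a → (Bset A a x).Nonempty := by
    intro x hx hxa
    obtain ⟨S, hS, rfl⟩ := hAtomic x
    by_contra hne
    rw [Finset.not_nonempty_iff_eq_empty] at hne
    -- every atom in S equals a
    have hSsub : S ⊆ {a} := by
      intro b hb
      by_contra hba
      rw [Finset.mem_singleton] at hba
      have : b ∈ Bset A a (S.sup id) :=
        (mem_Bset A a _ b).2 ⟨hS hb, hba, Finset.le_sup (f := id) hb⟩
      simp [hne] at this
    have hle : S.sup id ≤ a := Finset.sup_le fun b hb => by
      have := Finset.mem_singleton.1 (hSsub hb); simp [this]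
    rcases lt_or_eq_of_le hle with h | h
    · exact hx (((hA a).1 ha).2 _ h)
    · exact hxa h
  have hne' : ∀ x : L, x ≠ ⊥ → x ≠ a → tmap A a x ≠ ⊥ := by
    intro x hx hxa
    obtain ⟨b, hb⟩ := hBne x hx hxa
    have hbA := ((mem_Bset A a x b).1 hb).1
    have hatom := (hA b).1 hbA
    have : b ≤ tmap A a x := by
      rw [tmap_eq]; exact Finset.le_sup (f := id) hb
    intro h
    exact hatom.1 (le_bot_iff.1 (h ▸ this))
  refine ⟨hBne, ?_, ?_, ?_⟩
  · intro x hx hxa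
    refine ⟨?_, hne' x hx hxa⟩
    rw [tmap_eq]
    exact ⟨Bset A a x, fun b hb => Finset.mem_erase.2
      ⟨((mem_Bset A a x b).1 hb).2.1, ((mem_Bset A a x b).1 hb).1⟩, rfl⟩
  · intro x y _ _ _ _ hxy
    rw [tmap_eq, tmap_eq]
    refine Finset.sup_mono fun b hb => ?_
    obtain ⟨h1, h2, h3⟩ := (mem_Bset A a x b).1 hb
    exact (mem_Bset A a y b).2 ⟨h1, h2, h3.trans hxy⟩
  · intro x hx hxbot
    have hxa : x ≠ a := by
      rintro rfl
      obtain ⟨S, hS, hSx⟩ := hx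
      have haatom := (hA x).1 ha
      rcases S.eq_empty_or_nonempty with rfl | ⟨b, hb⟩
      · simp at hSx; exact haatom.1 hSx.symm
      · have hba : b ≤ x := hSx ▸ Finset.le_sup (f := id) hb
        have hbatom := (hA b).1 (Finset.mem_of_mem_erase (hS hb))
        have : b ≠ x := Finset.ne_of_mem_erase (hS hb)
        rcases lt_or_eq_of_le hba with h | h
        · exact hbatom.1 (haatom.2 b h)
        · exact this h
    constructor
    · exact ⟨⟨hxbot, hxa⟩, le_sup_Bset_of_mem A a x hx |>.trans (tmap_eq A a x).ge⟩
    · rintro y ⟨⟨hy, hya⟩, hxy⟩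
      exact hxy.trans (tmap_le A a y)
end
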